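/- Let G have maximum degree at most 3, let M be the output matching of a 1-2-MinGreedy execution on G, and let M* be a maximum matching of G in normal form with respect to M. Let X be a connected component of (V, M ∪ M*), define D_X = 4 if X is a singleton and D_X = 2·m_X if X is an M-augmenting path with m_X edges of M, and let i be the creation step of X with selected vertex u_i. Then d_X ≤ D_X − 2 holds in each of the following cases: (a) the degree of u_i in G_{i-1} equals 1; (b) the degree of u_i in G_{i-1} equals 3; (c) X is a singleton. -/

import Mathlib

namespace MinGreedy

noncomputable section

open SimpleGraph

/-- The degree of a vertex `x` in the graph `H`. -/
def deg {V : Type} (H : SimpleGraph V) (x : V) : ℕ :=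
  (H.neighborSet x).ncard

/-- `M` is a matching of `G`, given as a set of pairwise disjoint edges of `G`. -/
def IsMatchingSet {V : Type} (G : SimpleGraph V) (M : Set (Sym2 V)) : Prop :=
  M ⊆ G.edgeSet ∧ ∀ e ∈ M, ∀ f ∈ M, e ≠ f → ∀ x : V, x ∈ e → x ∉ f

/-- `M` is a maximum matching of `G`. -/
def IsMaxMatchingSet {V : Type} (G : SimpleGraph V) (M : Set (Sym2 V)) : Prop :=
  IsMatchingSet G M ∧ ∀ N : Set (Sym2 V), IsMatchingSet G N → N.ncard ≤ M.ncard

/-- `ν G`, the maximum size of a matching of `G`. -/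
def nu {V : Type} (G : SimpleGraph V) : ℕ :=
  sSup {n | ∃ M : Set (Sym2 V), IsMatchingSet G M ∧ M.ncard = n}

/-- `G` has maximum degree at most `Δ`. -/
def maxDegLE {V : Type} (G : SimpleGraph V) (Δ : ℕ) : Prop :=
  ∀ x : V, deg G x ≤ Δ

/-- An execution of a greedy matching algorithm on `G`: in step `i` (`0 ≤ i < k`) the
edge `{sel i, oth i}` of `Gs i` is picked with selected vertex `sel i`, and `Gs (i+1)`
is obtained from `Gs i` by deleting all edges incident with `sel i` or `oth i`;
at the end `Gs k` has no edges. -/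
structure GreedyExec (V : Type) (G : SimpleGraph V) where
  k : ℕ
  Gs : ℕ → SimpleGraph V
  sel : ℕ → V
  oth : ℕ → V
  init : Gs 0 = G
  adj : ∀ i < k, (Gs i).Adj (sel i) (oth i)
  step : ∀ i < k, Gs (i + 1) =
    SimpleGraph.fromEdgeSet {e | e ∈ (Gs i).edgeSet ∧ sel i ∉ e ∧ oth i ∉ e}
  final : (Gs k).edgeSet = ∅

/-- The output matching `M = {e_1, …, e_k}` of an execution. -/
def GreedyExec.M {V : Type} {G : SimpleGraph V} (E : GreedyExec V G) : Set (Sym2 V) :=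
  {e | ∃ i < E.k, e = s(E.sel i, E.oth i)}

/-- The execution is a MinGreedy execution: in each step the selected vertex has
minimum positive degree in the current graph. -/
def GreedyExec.IsMinGreedy {V : Type} {G : SimpleGraph V} (E : GreedyExec V G) : Prop :=
  ∀ i < E.k, ∀ x : V, 0 < deg (E.Gs i) x → deg (E.Gs i) (E.sel i) ≤ deg (E.Gs i) x

/-- The execution is a 1-2-MinGreedy execution: whenever the current graph has a vertex of
degree 1 or 2, the selected vertex has minimum positive degree in the current graph. -/
def GreedyExec.Is12MinGreedy {V : Type} {G : SimpleGraph V} (E : GreedyExec V G) : Prop :=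
  ∀ i < E.k, (∃ x : V, deg (E.Gs i) x = 1 ∨ deg (E.Gs i) x = 2) →
    ∀ x : V, 0 < deg (E.Gs i) x → deg (E.Gs i) (E.sel i) ≤ deg (E.Gs i) x

/-- `p 0, p 1, …, p (2m+1)` is an `M`-augmenting path: an `M`-alternating path whose
first and last edges lie in `Mopt` and whose two endpoints `p 0` and `p (2m+1)` are
not covered by `M`; it has `m` edges of `M` and `m+1` edges of `Mopt`. -/
def IsAugPath {V : Type} (M Mopt : Set (Sym2 V)) (m : ℕ) (p : ℕ → V) : Prop :=
  (∀ i ≤ 2 * m + 1, ∀ j ≤ 2 * m + 1, p i = p j → i = j) ∧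
  (∀ j ≤ 2 * m, (j % 2 = 0 → s(p j, p (j + 1)) ∈ Mopt) ∧
                (j % 2 = 1 → s(p j, p (j + 1)) ∈ M)) ∧
  (∀ e ∈ M, p 0 ∉ e ∧ p (2 * m + 1) ∉ e)

/-- The vertex set of the path `p 0, …, p (2m+1)`. -/
def pathSupp {V : Type} (m : ℕ) (p : ℕ → V) : Set V := p '' {j | j ≤ 2 * m + 1}

/-- `w` is an endpoint of an `M`-augmenting path of the graph `(V, M ∪ Mopt)`. -/
def IsPathEndpoint {V : Type} (M Mopt : Set (Sym2 V)) (w : V) : Prop :=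
  ∃ m p, IsAugPath M Mopt m p ∧ (w = p 0 ∨ w = p (2 * m + 1))

/-- `S` is the vertex set of a singleton component: a single edge of `M ∩ Mopt`. -/
def IsSingletonComp {V : Type} (M Mopt : Set (Sym2 V)) (S : Set V) : Prop :=
  ∃ x y : V, x ≠ y ∧ s(x, y) ∈ M ∧ s(x, y) ∈ Mopt ∧ S = ({x, y} : Set V)

/-- `Mopt` is a maximum matching of `G` in normal form with respect to `M`: every
(nontrivial) connected component of the graph `(V, M ∪ Mopt)` is a singleton
(a single edge of `M ∩ Mopt`) or an `M`-augmenting path. -/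
def NormalForm {V : Type} (G : SimpleGraph V) (M Mopt : Set (Sym2 V)) : Prop :=
  IsMaxMatchingSet G Mopt ∧
  ∀ C : (SimpleGraph.fromEdgeSet (M ∪ Mopt)).ConnectedComponent,
    2 ≤ C.supp.ncard →
    IsSingletonComp M Mopt C.supp ∨
    ∃ m p, IsAugPath M Mopt m p ∧ C.supp = pathSupp m p

/-- `{x, y}` is an edge of `F = E ∖ (M ∪ Mopt)`. -/
def FEdge {V : Type} (G : SimpleGraph V) (M Mopt : Set (Sym2 V)) (x y : V) : Prop :=
  s(x, y) ∈ G.edgeSet ∧ s(x, y) ∉ M ∧ s(x, y) ∉ Mopt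

/-- The number of `F`-edges incident with `x`. -/
def Fdeg {V : Type} (G : SimpleGraph V) (M Mopt : Set (Sym2 V)) (x : V) : ℕ :=
  {e : Sym2 V | e ∈ G.edgeSet ∧ e ∉ M ∧ e ∉ Mopt ∧ x ∈ e}.ncard

/-- `x` is matched at step `i` of the execution, i.e. `x ∈ e_i`. -/
def matchedAt {V : Type} {G : SimpleGraph V} (E : GreedyExec V G) (i : ℕ) (x : V) : Prop :=
  i < E.k ∧ (x = E.sel i ∨ x = E.oth i)

/-- The `F`-edge `{v, w}` is a transfer from `v` to `w` arising at step `i`: `w` is an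
endpoint of an `M`-augmenting path, `v` is matched at step `i` and the degree of `w`
in the graph after step `i` is at most 1. -/
def transferAt {V : Type} {G : SimpleGraph V} (E : GreedyExec V G)
    (M Mopt : Set (Sym2 V)) (i : ℕ) (v w : V) : Prop :=
  FEdge G M Mopt v w ∧ IsPathEndpoint M Mopt w ∧ matchedAt E i v ∧
  deg (E.Gs (i + 1)) w ≤ 1

/-- The edge `{v, w}` is a transfer from `v` to `w`. -/
def IsTransfer {V : Type} {G : SimpleGraph V} (E : GreedyExec V G)
    (M Mopt : Set (Sym2 V)) (v w : V) : Prop :=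
  ∃ i, transferAt E M Mopt i v w

/-- `(v, w)` is an uncanceled transfer arising at step `i`: it is a transfer arising at
step `i` and it is not the case that (`w` has degree exactly 1 before step `i` with its
unique incident edge being `{v, w}`, and `w` is the target of at least two uncanceled
transfers arising at steps before `i`). -/
def uncanceledAt {V : Type} {G : SimpleGraph V} (E : GreedyExec V G)
    (M Mopt : Set (Sym2 V)) (i : ℕ) : V → V → Prop :=
  Nat.strongRecOn (motive := fun _ => V → V → Prop) i (fun i ih v w =>
    transferAt E M Mopt i v w ∧
    ¬(deg (E.Gs i) w = 1 ∧ (E.Gs i).Adj v w ∧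
      ∃ (j₁ : ℕ) (h₁ : j₁ < i) (v₁ : V) (j₂ : ℕ) (h₂ : j₂ < i) (v₂ : V),
        ih j₁ h₁ v₁ w ∧ ih j₂ h₂ v₂ w ∧ (j₁, v₁) ≠ (j₂, v₂)))

/-- `(v, w)` is an uncanceled transfer. -/
def IsUncanceledTransfer {V : Type} {G : SimpleGraph V} (E : GreedyExec V G)
    (M Mopt : Set (Sym2 V)) (v w : V) : Prop :=
  ∃ i, uncanceledAt E M Mopt i v w

/-- `(v, w)` is a canceled transfer. -/
def IsCanceledTransfer {V : Type} {G : SimpleGraph V} (E : GreedyExec V G)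
    (M Mopt : Set (Sym2 V)) (v w : V) : Prop :=
  IsTransfer E M Mopt v w ∧ ¬IsUncanceledTransfer E M Mopt v w

/-- `d_X`: the number of transfers whose source lies in the vertex set `X`. -/
def debits {V : Type} {G : SimpleGraph V} (E : GreedyExec V G)
    (M Mopt : Set (Sym2 V)) (X : Set V) : ℕ :=
  {q : V × V | IsTransfer E M Mopt q.1 q.2 ∧ q.1 ∈ X}.ncard

/-- `c_X`: the number of transfers whose target lies in the vertex set `X`. -/
def credits {V : Type} {G : SimpleGraph V} (E : GreedyExec V G)
    (M Mopt : Set (Sym2 V)) (X : Set V) : ℕ :=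
  {q : V × V | IsTransfer E M Mopt q.1 q.2 ∧ q.2 ∈ X}.ncard

/-- `i` is the creation step of the component with vertex set `X`: the step in which the
first edge of `M` lying in `X` is picked. -/
def creationStep {V : Type} {G : SimpleGraph V} (E : GreedyExec V G)
    (X : Set V) (i : ℕ) : Prop :=
  i < E.k ∧ E.sel i ∈ X ∧ E.oth i ∈ X ∧ ∀ j < i, ¬(E.sel j ∈ X ∧ E.oth j ∈ X)

/-- A degree-1 endpoint exists after the creation step `i`: some transfer with source
`sel i` or `oth i` targets an endpoint `w` of degree exactly 1 after step `i`. -/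
def Deg1EndpointAfter {V : Type} {G : SimpleGraph V} (E : GreedyExec V G)
    (M Mopt : Set (Sym2 V)) (i : ℕ) : Prop :=
  ∃ v w : V, (v = E.sel i ∨ v = E.oth i) ∧ transferAt E M Mopt i v w ∧
    deg (E.Gs (i + 1)) w = 1

section Lemmas

set_option linter.unusedSectionVars false

variable {V : Type} [Fintype V]

lemma deg_pos_of_adj {H : SimpleGraph V} {x y : V} (h : H.Adj x y) : 0 < deg H x :=
  (Set.ncard_pos (Set.toFinite _)).mpr ⟨y, h⟩

lemma deg_mono_of_subset {H H' : SimpleGraph V} {x : V}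
    (h : H.neighborSet x ⊆ H'.neighborSet x) : deg H x ≤ deg H' x :=
  Set.ncard_le_ncard h (Set.toFinite _)

lemma ncard3_diff_pair {s : Set V} {a b : V} (hs : s.ncard = 3) (ha : a ∈ s) (hb : b ∈ s)
    (hab : a ≠ b) : (s \ {a, b}).ncard = 1 := by
  have hsub : ({a, b} : Set V) ⊆ s := by
    rintro x (rfl | rfl); exact ha; exact hb
  rw [Set.ncard_diff hsub (Set.toFinite _), hs, Set.ncard_pair hab]

lemma mem_pair_of_diff_small {s : Set V} {a b : V} (hs : s.ncard = 3)
    (h : (s \ {a, b}).ncard ≤ 1) : a ∈ s ∧ b ∈ s := by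
  constructor
  · by_contra ha
    have heq : s \ {a, b} = s \ {b} := by
      ext x
      simp only [Set.mem_diff, Set.mem_insert_iff, Set.mem_singleton_iff]
      constructor
      · rintro ⟨h1, h2⟩; exact ⟨h1, fun hx => h2 (Or.inr hx)⟩
      · rintro ⟨h1, h2⟩; exact ⟨h1, by rintro (rfl | rfl); exact ha h1; exact h2 rfl⟩
    rw [heq] at h
    have h2 : 2 ≤ (s \ {b}).ncard := by
      by_cases hbs : b ∈ s
      · rw [Set.ncard_diff_singleton_of_mem hbs, hs]
      · rw [Set.diff_singleton_eq_self hbs, hs]; omega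
    omega
  · by_contra hb
    have heq : s \ {a, b} = s \ {a} := by
      ext x
      simp only [Set.mem_diff, Set.mem_insert_iff, Set.mem_singleton_iff]
      constructor
      · rintro ⟨h1, h2⟩; exact ⟨h1, fun hx => h2 (Or.inl hx)⟩
      · rintro ⟨h1, h2⟩; exact ⟨h1, by rintro (rfl | rfl); exact h2 rfl; exact hb h1⟩
    rw [heq] at h
    have h2 : 2 ≤ (s \ {a}).ncard := by
      by_cases has : a ∈ s
      · rw [Set.ncard_diff_singleton_of_mem has, hs]
      · rw [Set.diff_singleton_eq_self has, hs]; omega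
    omega

lemma eq_triple_of_ncard3 {s : Set V} {a b c : V} (hs : s.ncard = 3)
    (ha : a ∈ s) (hb : b ∈ s) (hc : c ∈ s) (hab : a ≠ b) (hac : a ≠ c) (hbc : b ≠ c) :
    s = {a, b, c} := by
  have hsub : ({a, b, c} : Set V) ⊆ s := by rintro x (rfl | rfl | rfl) <;> assumption
  have hcard : ({a, b, c} : Set V).ncard = 3 := by
    rw [Set.ncard_insert_of_notMem (by simp [hab, hac]) (Set.toFinite _), Set.ncard_pair hbc]
  exact (Set.eq_of_subset_of_ncard_le hsub (by omega) (Set.toFinite s)).symm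

lemma eq_pair_of_ncard2 {s : Set V} {a b : V} (hs : s.ncard = 2)
    (ha : a ∈ s) (hb : b ∈ s) (hab : a ≠ b) : s = {a, b} := by
  have hsub : ({a, b} : Set V) ⊆ s := by rintro x (rfl | rfl) <;> assumption
  exact (Set.eq_of_subset_of_ncard_le hsub (by rw [Set.ncard_pair hab, hs]) (Set.toFinite s)).symm


lemma diff_lt_implies_inter {s t : Set V} (h : (s \ t).ncard < s.ncard) :
    ∃ x, x ∈ s ∧ x ∈ t := by
  by_contra hc
  push_neg at hc
  have : s \ t = s := by
    ext z; constructor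
    · exact fun hz => hz.1
    · exact fun hz => ⟨hz, fun hzt => hc z hz hzt⟩
  rw [this] at h
  omega

variable {G : SimpleGraph V} (E : GreedyExec V G)


lemma adj_succ {i : ℕ} (hi : i < E.k) (a b : V) :
    (E.Gs (i+1)).Adj a b ↔
      (E.Gs i).Adj a b ∧ (E.sel i ≠ a ∧ E.sel i ≠ b) ∧ (E.oth i ≠ a ∧ E.oth i ≠ b) := by
  rw [E.step i hi, fromEdgeSet_adj]
  simp only [Set.mem_setOf_eq, SimpleGraph.mem_edgeSet, Sym2.mem_iff]
  constructor
  · rintro ⟨⟨h1, h2, h3⟩, -⟩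
    exact ⟨h1, ⟨fun h => h2 (Or.inl h), fun h => h2 (Or.inr h)⟩,
      ⟨fun h => h3 (Or.inl h), fun h => h3 (Or.inr h)⟩⟩
  · rintro ⟨h1, ⟨h2, h3⟩, h4, h5⟩
    exact ⟨⟨h1, fun h => h.elim h2 h3, fun h => h.elim h4 h5⟩, h1.ne⟩

lemma adj_mono : ∀ {a b : ℕ}, a ≤ b → b ≤ E.k → ∀ {x y : V},
    (E.Gs b).Adj x y → (E.Gs a).Adj x y := by
  intro a b
  induction b with
  | zero =>
    intro hab _ x y h
    obtain rfl : a = 0 := by omega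
    exact h
  | succ n ih =>
    intro hab hbk x y h
    rcases Nat.eq_or_lt_of_le hab with rfl | hlt
    · exact h
    · have hn : n < E.k := by omega
      have := ((adj_succ E hn x y).mp h).1
      exact ih (by omega) (by omega) this

lemma adj_le_G {b : ℕ} (hbk : b ≤ E.k) {x y : V} (h : (E.Gs b).Adj x y) : G.Adj x y := by
  have := adj_mono E (Nat.zero_le b) hbk h
  rwa [E.init] at this

lemma not_adj_succ {i : ℕ} (hi : i < E.k) {x y : V} (hx : x = E.sel i ∨ x = E.oth i) :
    ¬ (E.Gs (i+1)).Adj x y := by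
  intro h
  rw [adj_succ E hi] at h
  rcases hx with rfl | rfl
  · exact h.2.1.1 rfl
  · exact h.2.2.1 rfl

lemma adj_lt_k {j : ℕ} (hj : j ≤ E.k) {x y : V} (h : (E.Gs j).Adj x y) : j < E.k := by
  rcases Nat.eq_or_lt_of_le hj with rfl | h'
  · exfalso
    have : s(x,y) ∈ (E.Gs E.k).edgeSet := h
    rw [E.final] at this
    exact this
  · exact h'

lemma matched_once {i j : ℕ} {x : V} (hi : matchedAt E i x) (hj : matchedAt E j x) :
    i = j := by
  by_contra hne
  wlog hlt : i < j generalizing i j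
  · exact this hj hi (Ne.symm hne) (by omega)
  obtain ⟨hjk, hjx⟩ := hj
  have hadj : (E.Gs j).Adj (E.sel j) (E.oth j) := E.adj j hjk
  obtain ⟨z, hadjx⟩ : ∃ z, (E.Gs j).Adj x z := by
    rcases hjx with rfl | rfl
    · exact ⟨_, hadj⟩
    · exact ⟨_, hadj.symm⟩
  have h2 : (E.Gs (i+1)).Adj x z := adj_mono E (by omega) (by omega) hadjx
  exact not_adj_succ E hi.1 hi.2 h2

lemma M_edge_unique {i : ℕ} {x : V} (hi : matchedAt E i x) {e : Sym2 V}
    (he : e ∈ E.M) (hxe : x ∈ e) : e = s(E.sel i, E.oth i) := by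
  obtain ⟨l, hl, rfl⟩ := he
  have : matchedAt E l x := ⟨hl, by rcases Sym2.mem_iff.mp hxe with h | h <;> [left; right] <;> exact h⟩
  rw [matched_once E this hi]

lemma present {i : ℕ} (hik : i ≤ E.k) {a b : V} (hab : G.Adj a b)
    (ha : ∀ j < i, ¬ matchedAt E j a) (hb : ∀ j < i, ¬ matchedAt E j b) :
    (E.Gs i).Adj a b := by
  induction i with
  | zero => rwa [E.init]
  | succ n ih =>
    have hn : n < E.k := by omega
    have hprev : (E.Gs n).Adj a b :=
      ih (by omega) (fun j hj => ha j (by omega)) (fun j hj => hb j (by omega))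
    rw [adj_succ E hn]
    refine ⟨hprev, ⟨?_, ?_⟩, ?_, ?_⟩
    · intro h; exact ha n (by omega) ⟨hn, Or.inl h.symm⟩
    · intro h; exact hb n (by omega) ⟨hn, Or.inl h.symm⟩
    · intro h; exact ha n (by omega) ⟨hn, Or.inr h.symm⟩
    · intro h; exact hb n (by omega) ⟨hn, Or.inr h.symm⟩

lemma neighborSet_succ {i : ℕ} (hi : i < E.k) {x : V}
    (hx : x ≠ E.sel i ∧ x ≠ E.oth i) :
    (E.Gs (i+1)).neighborSet x = (E.Gs i).neighborSet x \ {E.sel i, E.oth i} := by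
  ext y
  simp only [mem_neighborSet, Set.mem_diff, Set.mem_insert_iff, Set.mem_singleton_iff]
  rw [adj_succ E hi]
  constructor
  · rintro ⟨h1, ⟨h2, h3⟩, h4, h5⟩
    exact ⟨h1, by rintro (rfl | rfl); exact h3 rfl; exact h5 rfl⟩
  · rintro ⟨h1, h2⟩
    push_neg at h2
    exact ⟨h1, ⟨fun h => hx.1 h.symm, fun h => h2.1 h.symm⟩,
      fun h => hx.2 h.symm, fun h => h2.2 h.symm⟩

lemma neighborSet_succ_matched {i : ℕ} (hi : i < E.k) {x : V}
    (hx : x = E.sel i ∨ x = E.oth i) :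
    (E.Gs (i+1)).neighborSet x = ∅ := by
  ext y
  simp only [mem_neighborSet, Set.mem_empty_iff_false, iff_false]
  exact not_adj_succ E hi hx


lemma neighborSet_subset_G {i : ℕ} (hik : i ≤ E.k) (x : V) :
    (E.Gs i).neighborSet x ⊆ G.neighborSet x :=
  fun _ hy => adj_le_G E hik hy

lemma deg_le_deg_G {i : ℕ} (hik : i ≤ E.k) (x : V) : deg (E.Gs i) x ≤ deg G x :=
  Set.ncard_le_ncard (neighborSet_subset_G E hik x) (Set.toFinite _)

lemma endpoint_unmatched {Mopt : Set (Sym2 V)} {w : V}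
    (h : IsPathEndpoint E.M Mopt w) {j : ℕ} : ¬ matchedAt E j w := by
  obtain ⟨m, p, ⟨_, _, hM⟩, hw⟩ := h
  intro hm
  have hmem : w ∈ s(E.sel j, E.oth j) := by
    rcases hm.2 with rfl | rfl
    · exact Sym2.mem_mk_left _ _
    · exact Sym2.mem_mk_right _ _
  have hMe : s(E.sel j, E.oth j) ∈ E.M := ⟨j, hm.1, rfl⟩
  rcases hw with rfl | rfl
  · exact (hM _ hMe).1 hmem
  · exact (hM _ hMe).2 hmem

/-- Extraction of all facts about a transfer from a vertex matched at step `i`. -/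
lemma transfer_data {Mopt : Set (Sym2 V)} {c w : V} {i : ℕ}
    (ht : IsTransfer E E.M Mopt c w) (hm : matchedAt E i c) :
    FEdge G E.M Mopt c w ∧ (∀ j, ¬ matchedAt E j w) ∧
      deg (E.Gs (i + 1)) w ≤ 1 ∧ (E.Gs i).Adj c w ∧ w ≠ E.sel i ∧ w ≠ E.oth i ∧
      IsPathEndpoint E.M Mopt w := by
  obtain ⟨l, hF, hep, hml, hdegw⟩ := ht
  have hli : l = i := matched_once E hml hm
  rw [hli] at hml hdegw
  have hwun : ∀ j, ¬ matchedAt E j w := fun j => endpoint_unmatched E hep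
  have hGadj : G.Adj c w := G.mem_edgeSet.mp hF.1
  have hadj : (E.Gs i).Adj c w := by
    refine present E (le_of_lt hm.1) hGadj ?_ ?_
    · intro j hj hjm
      have := matched_once E hjm hm
      omega
    · intro j _ hjm
      exact hwun j hjm
  refine ⟨hF, hwun, hdegw, hadj, ?_, ?_, hep⟩
  · intro h; exact hwun i ⟨hm.1, Or.inl h⟩
  · intro h; exact hwun i ⟨hm.1, Or.inr h⟩


lemma mem_nbr_symm {H : SimpleGraph V} {a b : V} :
    a ∈ H.neighborSet b ↔ b ∈ H.neighborSet a := by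
  simp only [SimpleGraph.mem_neighborSet]
  exact ⟨fun h => h.symm, fun h => h.symm⟩

lemma ncard_diff_singleton_ge {s : Set V} {c : V} : s.ncard - 1 ≤ (s \ {c}).ncard := by
  have hsub : s ⊆ insert c (s \ {c}) := by
    intro z hz
    by_cases hzc : z = c
    · exact Or.inl hzc
    · exact Or.inr ⟨hz, hzc⟩
  have := Set.ncard_le_ncard hsub (Set.toFinite _)
  have h2 := Set.ncard_insert_le c (s \ {c})
  omega

lemma singleton_debits (hdeg : maxDegLE G 3) (h12 : E.Is12MinGreedy)
    (Mopt : Set (Sym2 V)) {x y : V}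
    (hM : s(x, y) ∈ E.M) :
    debits E E.M Mopt ({x, y} : Set V) ≤ 2 := by
  classical
  obtain ⟨i, hik, heq⟩ := hM
  have hxy : ({x, y} : Set V) = {E.sel i, E.oth i} := by
    rcases Sym2.eq_iff.mp heq with ⟨rfl, rfl⟩ | ⟨rfl, rfl⟩
    · rfl
    · exact Set.pair_comm _ _
  set u := E.sel i with hu
  set v := E.oth i with hv
  set T := {q : V × V | IsTransfer E E.M Mopt q.1 q.2 ∧ q.1 ∈ ({x, y} : Set V)} with hTdef
  show T.ncard ≤ 2
  have hadj : (E.Gs i).Adj u v := E.adj i hik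
  have hneuv : u ≠ v := hadj.ne
  have hmu : matchedAt E i u := ⟨hik, Or.inl rfl⟩
  have hmv : matchedAt E i v := ⟨hik, Or.inr rfl⟩
  have hsrc : ∀ q ∈ T, q.1 = u ∨ q.1 = v := by
    intro q hq
    have h2 := hq.2
    rw [hxy] at h2
    simpa using h2
  set N : V → Set V := fun z => (E.Gs i).neighborSet z with hN
  set N' : V → Set V := fun z => (E.Gs (i+1)).neighborSet z with hN'
  have hdata : ∀ q ∈ T, (E.Gs i).Adj q.1 q.2 ∧ (∀ j, ¬ matchedAt E j q.2) ∧
      deg (E.Gs (i+1)) q.2 ≤ 1 ∧ N' q.2 = N q.2 \ {u, v} := by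
    intro q hq
    have hm : matchedAt E i q.1 := by
      rcases hsrc q hq with h | h
      · rw [h]; exact hmu
      · rw [h]; exact hmv
    obtain ⟨_, hun, hdg, hadjq, hns, hno, _⟩ := transfer_data E hq.1 hm
    exact ⟨hadjq, hun, hdg, neighborSet_succ E hik ⟨hns, hno⟩⟩
  have hdegu_pos : 0 < deg (E.Gs i) u := deg_pos_of_adj hadj
  have hdegu_le : deg (E.Gs i) u ≤ 3 := le_trans (deg_le_deg_G E (le_of_lt hik) u) (hdeg u)
  have hdegv_le : deg (E.Gs i) v ≤ 3 := le_trans (deg_le_deg_G E (le_of_lt hik) v) (hdeg v)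
  have huNv : u ∈ N v := hadj.symm
  have hvNu : v ∈ N u := hadj
  -- tail bound when there are no transfers out of u
  have tail : (∀ w, (u, w) ∉ T) → T.ncard ≤ 2 := by
    intro hnu
    have hsub : T ⊆ Prod.mk v '' (N v \ {u}) := by
      intro q hq
      have hq1 : q.1 = v := by
        rcases hsrc q hq with h | h
        · exfalso
          exact hnu q.2 (by rwa [show (u, q.2) = q from Prod.ext h.symm rfl])
        · exact h
      obtain ⟨hadjq, hun, _, _⟩ := hdata q hq
      refine ⟨q.2, ⟨?_, ?_⟩, ?_⟩
      · rw [← hq1]; exact hq1 ▸ hadjq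
      · intro hq2u
        exact hun i (by rw [Set.mem_singleton_iff] at hq2u; rw [hq2u]; exact hmu)
      · exact Prod.ext hq1.symm rfl
    calc T.ncard ≤ (Prod.mk v '' (N v \ {u})).ncard :=
          Set.ncard_le_ncard hsub (Set.toFinite _)
      _ ≤ (N v \ {u}).ncard := Set.ncard_image_le (Set.toFinite _)
      _ = (N v).ncard - 1 := Set.ncard_diff_singleton_of_mem huNv
      _ ≤ 2 := by
          have : (N v).ncard ≤ 3 := hdegv_le
          omega
  -- case analysis on degree of u
  have hdu : deg (E.Gs i) u = 1 ∨ deg (E.Gs i) u = 2 ∨ deg (E.Gs i) u = 3 := by omega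
  rcases hdu with hdu | hdu | hdu
  · -- degree 1 : no transfer out of u
    apply tail
    intro w hw
    obtain ⟨hadjw, hun, _, _⟩ := hdata (u, w) hw
    obtain ⟨z0, hz0⟩ := Set.ncard_eq_one.mp (show (N u).ncard = 1 from hdu)
    have h1 : w ∈ N u := hadjw
    have h2 : v ∈ N u := hvNu
    rw [hz0] at h1 h2
    have : w = v := by
      rw [Set.mem_singleton_iff] at h1 h2; rw [h1, h2]
    exact hun i (this ▸ hmv)
  · -- degree 2
    by_cases hex : ∃ a, (u, a) ∈ T
    · obtain ⟨a, haT⟩ := hex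
      obtain ⟨hadja, huna, hdga, hNsa⟩ := hdata (u, a) haT
      have hanu : a ≠ u := hadja.ne'
      have hanv : a ≠ v := fun h => huna i (h ▸ hmv)
      have hNu : N u = {v, a} := eq_pair_of_ncard2 hdu hvNu hadja (Ne.symm hanv)
      -- minimum degree 2
      have hmin : ∀ z, 0 < deg (E.Gs i) z → 2 ≤ deg (E.Gs i) z := by
        intro z hz
        have hle := h12 i hik ⟨u, Or.inr hdu⟩ z hz
        rw [← hu] at hle
        omega
      -- at most one transfer out of v
      have hC2 : ∀ w1 w2, (v, w1) ∈ T → (v, w2) ∈ T → w1 = w2 := by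
        intro w1 w2 h1 h2
        by_contra hne
        obtain ⟨hadj1, hun1, hdg1, hNs1⟩ := hdata (v, w1) h1
        obtain ⟨hadj2, hun2, hdg2, hNs2⟩ := hdata (v, w2) h2
        have hw1u : w1 ≠ u := fun h => hun1 i (h ▸ hmu)
        have hw2u : w2 ≠ u := fun h => hun2 i (h ▸ hmu)
        have hNv3 : deg (E.Gs i) v = 3 := by
          have hsub3 : ({u, w1, w2} : Set V) ⊆ N v := by
            rintro z (rfl | rfl | rfl)
            · exact huNv
            · exact hadj1
            · exact hadj2
          have hc3 : ({u, w1, w2} : Set V).ncard = 3 := by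
            rw [Set.ncard_insert_of_notMem (by simp [Ne.symm hw1u, Ne.symm hw2u])
              (Set.toFinite _), Set.ncard_pair hne]
          have hle3 := Set.ncard_le_ncard hsub3 (Set.toFinite _)
          rw [hc3] at hle3
          have h3 : 3 ≤ deg (E.Gs i) v := hle3
          omega
        have hNv : N v = {u, w1, w2} := eq_triple_of_ncard3 hNv3 huNv hadj1 hadj2
          (Ne.symm hw1u) (Ne.symm hw2u) hne
        -- produce a pendant vertex that is never matched
        have pend : ∀ w, (∀ j, ¬ matchedAt E j w) → N' w = N w \ {u, v} →
            deg (E.Gs (i+1)) w ≤ 1 → 0 < deg (E.Gs i) w →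
            (u ∉ N w ∨ v ∉ N w) → deg (E.Gs (i+1)) w = 1 := by
          intro w hun hNs hd1 hpos hmem
          have h2w : 2 ≤ deg (E.Gs i) w := hmin w hpos
          have hkey : (N w).ncard - 1 ≤ (N w \ {u, v}).ncard := by
            rcases hmem with hm | hm
            · have : N w \ {u, v} = N w \ {v} := by
                ext z
                simp only [Set.mem_diff, Set.mem_insert_iff, Set.mem_singleton_iff]
                constructor
                · rintro ⟨h1, h2⟩; exact ⟨h1, fun hz => h2 (Or.inr hz)⟩
                · rintro ⟨h1, h2⟩
                  exact ⟨h1, by rintro (rfl | rfl); exact hm h1; exact h2 rfl⟩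
              rw [this]; exact ncard_diff_singleton_ge
            · have : N w \ {u, v} = N w \ {u} := by
                ext z
                simp only [Set.mem_diff, Set.mem_insert_iff, Set.mem_singleton_iff]
                constructor
                · rintro ⟨h1, h2⟩; exact ⟨h1, fun hz => h2 (Or.inl hz)⟩
                · rintro ⟨h1, h2⟩
                  exact ⟨h1, by rintro (rfl | rfl); exact h2 rfl; exact hm h1⟩
              rw [this]; exact ncard_diff_singleton_ge
          have hconv : deg (E.Gs (i+1)) w = (N w \ {u, v}).ncard := by
            show (N' w).ncard = _
            rw [hNs]
          have hNwdeg : (N w).ncard = deg (E.Gs i) w := rfl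
          omega
        have hpend : ∃ h0, deg (E.Gs (i+1)) h0 = 1 ∧ (∀ j, ¬ matchedAt E j h0) := by
          by_cases ha1 : a = w1
          · refine ⟨w2, pend w2 hun2 hNs2 hdg2 (deg_pos_of_adj hadj2.symm) ?_, hun2⟩
            left
            intro hw2Nu
            have hmem : w2 ∈ N u := mem_nbr_symm.mp hw2Nu
            rw [hNu] at hmem
            rcases hmem with h | h
            · exact hun2 i (h ▸ hmv)
            · rw [Set.mem_singleton_iff] at h
              exact hne (h.trans ha1).symm
          · by_cases ha2 : a = w2
            · refine ⟨w1, pend w1 hun1 hNs1 hdg1 (deg_pos_of_adj hadj1.symm) ?_, hun1⟩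
              left
              intro hw1Nu
              have hmem : w1 ∈ N u := mem_nbr_symm.mp hw1Nu
              rw [hNu] at hmem
              rcases hmem with h | h
              · exact hun1 i (h ▸ hmv)
              · rw [Set.mem_singleton_iff] at h
                exact hne (h.trans ha2)
            · refine ⟨a, pend a huna hNsa hdga (deg_pos_of_adj hadja.symm) ?_, huna⟩
              right
              intro hvNa
              have hmem : a ∈ N v := mem_nbr_symm.mp hvNa
              rw [hNv] at hmem
              rcases hmem with h | h | h
              · exact hanu h
              · exact ha1 h
              · rw [Set.mem_singleton_iff] at h; exact ha2 h
        obtain ⟨h0, hp0, hup0⟩ := hpend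
        -- next step must pick a never-matched vertex : contradiction
        have hk1 : i + 1 < E.k := by
          have : (N' h0).ncard = 1 := hp0
          obtain ⟨z0, hz0⟩ := Set.ncard_eq_one.mp this
          have : z0 ∈ N' h0 := by rw [hz0]; exact rfl
          exact adj_lt_k E (by omega) (this : (E.Gs (i+1)).Adj h0 z0)
        set sN := E.sel (i+1) with hsN
        have hsdeg : deg (E.Gs (i+1)) sN = 1 := by
          have hmin1 := h12 (i+1) hk1 ⟨h0, Or.inl hp0⟩
          have hpos : 0 < deg (E.Gs (i+1)) sN := deg_pos_of_adj (E.adj (i+1) hk1)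
          have h1 := hmin1 h0 (by rw [hp0]; omega)
          rw [hp0, ← hsN] at h1
          omega
        have hsnu : sN ≠ u := by
          intro h
          have hempty : (E.Gs (i+1)).neighborSet sN = ∅ :=
            neighborSet_succ_matched E hik (Or.inl (h.trans hu))
          have h0' : deg (E.Gs (i+1)) sN = 0 := by
            show ((E.Gs (i+1)).neighborSet sN).ncard = 0
            rw [hempty]
            exact Set.ncard_empty _
          omega
        have hsnv : sN ≠ v := by
          intro h
          have hempty : (E.Gs (i+1)).neighborSet sN = ∅ :=
            neighborSet_succ_matched E hik (Or.inr (h.trans hv))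
          have h0' : deg (E.Gs (i+1)) sN = 0 := by
            show ((E.Gs (i+1)).neighborSet sN).ncard = 0
            rw [hempty]
            exact Set.ncard_empty _
          omega
        have hNsN : N' sN = N sN \ {u, v} := neighborSet_succ E hik ⟨hsnu, hsnv⟩
        have hposN : 0 < deg (E.Gs i) sN := by
          have h1 : (N' sN).ncard = 1 := hsdeg
          obtain ⟨z0, hz0⟩ := Set.ncard_eq_one.mp h1
          have hz0m : z0 ∈ N' sN := by rw [hz0]; exact rfl
          rw [hNsN] at hz0m
          exact (Set.ncard_pos (Set.toFinite _)).mpr ⟨z0, hz0m.1⟩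
        have h2s : 2 ≤ deg (E.Gs i) sN := hmin sN hposN
        have hlt : (N sN \ {u, v}).ncard < (N sN).ncard := by
          have h1 : (N sN \ {u, v}).ncard = 1 := by rw [← hNsN]; exact hsdeg
          have : 2 ≤ (N sN).ncard := h2s
          omega
        obtain ⟨z0, hz0N, hz0uv⟩ := diff_lt_implies_inter hlt
        have hsNin : sN ∈ N u ∨ sN ∈ N v := by
          rcases hz0uv with rfl | hz0v
          · left; exact mem_nbr_symm.mp hz0N
          · rw [Set.mem_singleton_iff] at hz0v
            right; rw [← hz0v]; exact mem_nbr_symm.mp hz0N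
        have hsmatched : matchedAt E (i+1) sN := ⟨hk1, Or.inl rfl⟩
        rcases hsNin with h | h
        · rw [hNu] at h
          rcases h with h | h
          · exact hsnv h
          · rw [Set.mem_singleton_iff] at h
            exact huna (i+1) (h ▸ hsmatched)
        · rw [hNv] at h
          rcases h with h | h | h
          · exact hsnu h
          · exact hun1 (i+1) (h ▸ hsmatched)
          · rw [Set.mem_singleton_iff] at h
            exact hun2 (i+1) (h ▸ hsmatched)
      -- now bound T
      have huT : ∀ w, (u, w) ∈ T → w = a := by
        intro w hw
        obtain ⟨hadjw, hunw, _, _⟩ := hdata (u, w) hw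
        have : w ∈ N u := hadjw
        rw [hNu] at this
        rcases this with h | h
        · exact absurd h (fun h' => hunw i (h' ▸ hmv))
        · exact h
      by_cases hvex : ∃ w, (v, w) ∈ T
      · obtain ⟨w1, hw1T⟩ := hvex
        have hsub : T ⊆ {(u, a), (v, w1)} := by
          intro q hq
          rcases hsrc q hq with h | h
          · left
            have : q.2 = a := huT q.2 (by rwa [show (u, q.2) = q from Prod.ext h.symm rfl])
            exact Prod.ext h this
          · right
            have : q.2 = w1 := hC2 q.2 w1
              (by rwa [show (v, q.2) = q from Prod.ext h.symm rfl]) hw1T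
            exact Prod.ext h this
        calc T.ncard ≤ ({(u, a), (v, w1)} : Set (V × V)).ncard :=
              Set.ncard_le_ncard hsub (Set.toFinite _)
          _ ≤ 2 := le_trans (Set.ncard_insert_le _ _) (by simp)
      · have hsub : T ⊆ {(u, a)} := by
          intro q hq
          rcases hsrc q hq with h | h
          · have : q.2 = a := huT q.2 (by rwa [show (u, q.2) = q from Prod.ext h.symm rfl])
            exact Prod.ext h this
          · exfalso
            exact hvex ⟨q.2, by rwa [show (v, q.2) = q from Prod.ext h.symm rfl]⟩
        calc T.ncard ≤ ({(u, a)} : Set (V × V)).ncard :=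
              Set.ncard_le_ncard hsub (Set.toFinite _)
          _ ≤ 2 := by simp
    · push_neg at hex
      exact tail hex
  · -- degree 3 : the graph is 3-regular at step i
    have hreg : ∀ z, 0 < deg (E.Gs i) z → deg (E.Gs i) z = 3 := by
      intro z hz
      by_contra hzz
      have hz3 : deg (E.Gs i) z ≤ 3 := le_trans (deg_le_deg_G E (le_of_lt hik) z) (hdeg z)
      have h12z : deg (E.Gs i) z = 1 ∨ deg (E.Gs i) z = 2 := by omega
      have hle := h12 i hik ⟨z, h12z⟩ z hz
      rw [← hu] at hle
      omega
    -- all transfer targets coincide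
    have htgt : ∀ q ∈ T, u ∈ N q.2 ∧ v ∈ N q.2 ∧ deg (E.Gs (i+1)) q.2 = 1 := by
      intro q hq
      obtain ⟨hadjq, hunq, hdgq, hNsq⟩ := hdata q hq
      have hposw : 0 < deg (E.Gs i) q.2 := by
        rcases hsrc q hq with h | h
        · exact deg_pos_of_adj (h ▸ hadjq).symm
        · exact deg_pos_of_adj (h ▸ hadjq).symm
      have hw3 : deg (E.Gs i) q.2 = 3 := hreg q.2 hposw
      have hle : (N q.2 \ {u, v}).ncard ≤ 1 := by
        rw [← hNsq]; exact hdgq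
      obtain ⟨h1, h2⟩ := mem_pair_of_diff_small hw3 hle
      refine ⟨h1, h2, ?_⟩
      have : (N q.2 \ {u, v}).ncard = 1 := ncard3_diff_pair hw3 h1 h2 hneuv
      show (N' q.2).ncard = 1
      rw [hNsq]; exact this
    have hC3 : ∀ q1 ∈ T, ∀ q2 ∈ T, q1.2 = q2.2 := by
      intro q1 hq1 q2 hq2
      by_contra hne
      obtain ⟨hadj1, hun1, hdg1, hNs1⟩ := hdata q1 hq1
      obtain ⟨hadj2, hun2, hdg2, hNs2⟩ := hdata q2 hq2
      obtain ⟨hu1, hv1, hp1⟩ := htgt q1 hq1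
      obtain ⟨hu2, hv2, hp2⟩ := htgt q2 hq2
      set w1 := q1.2
      set w2 := q2.2
      have hw1v : w1 ≠ v := fun h => hun1 i (h ▸ hmv)
      have hw2v : w2 ≠ v := fun h => hun2 i (h ▸ hmv)
      have hNu : N u = {v, w1, w2} := by
        refine eq_triple_of_ncard3 hdu hvNu (mem_nbr_symm.mp hu1) (mem_nbr_symm.mp hu2)
          (Ne.symm hw1v) (Ne.symm hw2v) hne
      have hk1 : i + 1 < E.k := by
        have h1 : (N' w1).ncard = 1 := hp1
        obtain ⟨z0, hz0⟩ := Set.ncard_eq_one.mp h1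
        have : z0 ∈ N' w1 := by rw [hz0]; exact rfl
        exact adj_lt_k E (by omega) (this : (E.Gs (i+1)).Adj w1 z0)
      set sN := E.sel (i+1) with hsN
      have hsdeg : deg (E.Gs (i+1)) sN = 1 := by
        have hmin1 := h12 (i+1) hk1 ⟨w1, Or.inl hp1⟩
        have hpos : 0 < deg (E.Gs (i+1)) sN := deg_pos_of_adj (E.adj (i+1) hk1)
        have h1 := hmin1 w1 (by rw [hp1]; omega)
        rw [hp1, ← hsN] at h1
        omega
      have hsnu : sN ≠ u := by
        intro h
        have hempty : (E.Gs (i+1)).neighborSet sN = ∅ :=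
          neighborSet_succ_matched E hik (Or.inl (h.trans hu))
        have h0' : deg (E.Gs (i+1)) sN = 0 := by
          show ((E.Gs (i+1)).neighborSet sN).ncard = 0
          rw [hempty]
          exact Set.ncard_empty _
        omega
      have hsnv : sN ≠ v := by
        intro h
        have hempty : (E.Gs (i+1)).neighborSet sN = ∅ :=
          neighborSet_succ_matched E hik (Or.inr (h.trans hv))
        have h0' : deg (E.Gs (i+1)) sN = 0 := by
          show ((E.Gs (i+1)).neighborSet sN).ncard = 0
          rw [hempty]
          exact Set.ncard_empty _
        omega
      have hNsN : N' sN = N sN \ {u, v} := neighborSet_succ E hik ⟨hsnu, hsnv⟩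
      have hposN : 0 < deg (E.Gs i) sN := by
        have h1 : (N' sN).ncard = 1 := hsdeg
        obtain ⟨z0, hz0⟩ := Set.ncard_eq_one.mp h1
        have hz0m : z0 ∈ N' sN := by rw [hz0]; exact rfl
        rw [hNsN] at hz0m
        exact (Set.ncard_pos (Set.toFinite _)).mpr ⟨z0, hz0m.1⟩
      have hs3 : deg (E.Gs i) sN = 3 := hreg sN hposN
      have hle : (N sN \ {u, v}).ncard ≤ 1 := by
        rw [← hNsN]; exact le_of_eq hsdeg
      obtain ⟨hu', hv'⟩ := mem_pair_of_diff_small hs3 hle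
      have hsmatched : matchedAt E (i+1) sN := ⟨hk1, Or.inl rfl⟩
      have : sN ∈ N u := mem_nbr_symm.mp hu'
      rw [hNu] at this
      rcases this with h | h | h
      · exact hsnv h
      · exact hun1 (i+1) (h ▸ hsmatched)
      · rw [Set.mem_singleton_iff] at h
        exact hun2 (i+1) (h ▸ hsmatched)
    by_cases hTe : T = ∅
    · rw [hTe, Set.ncard_empty]; omega
    · obtain ⟨q0, hq0⟩ := Set.nonempty_iff_ne_empty.mpr hTe
      have hsub : T ⊆ {(u, q0.2), (v, q0.2)} := by
        intro q hq
        have h2 : q.2 = q0.2 := hC3 q hq q0 hq0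
        rcases hsrc q hq with h | h
        · left; exact Prod.ext h h2
        · right; exact Prod.ext h h2
      calc T.ncard ≤ ({(u, q0.2), (v, q0.2)} : Set (V × V)).ncard :=
            Set.ncard_le_ncard hsub (Set.toFinite _)
        _ ≤ 2 := le_trans (Set.ncard_insert_le _ _) (by simp)



lemma four_le_ncard {s : Set V} {a b c d : V} (ha : a ∈ s) (hb : b ∈ s) (hc : c ∈ s)
    (hd : d ∈ s) (hab : a ≠ b) (hac : a ≠ c) (had : a ≠ d) (hbc : b ≠ c) (hbd : b ≠ d)
    (hcd : c ≠ d) : 4 ≤ s.ncard := by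
  have hsub : ({a, b, c, d} : Set V) ⊆ s := by rintro z (rfl | rfl | rfl | rfl) <;> assumption
  have h4 : ({a, b, c, d} : Set V).ncard = 4 := by
    rw [Set.ncard_insert_of_notMem (by simp [hab, hac, had]) (Set.toFinite _),
      Set.ncard_insert_of_notMem (by simp [hbc, hbd]) (Set.toFinite _),
      Set.ncard_pair hcd]
  have := Set.ncard_le_ncard hsub (Set.toFinite _)
  omega

lemma aug_internal_edges {M Mopt : Set (Sym2 V)} {m : ℕ} {p : ℕ → V}
    (hP : IsAugPath M Mopt m p) {t : ℕ} (h1 : 1 ≤ t) (h2 : t ≤ 2*m) :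
    ∃ tm tb : ℕ, tm ≤ 2*m+1 ∧ tb ≤ 2*m+1 ∧ tm ≠ t ∧ tb ≠ t ∧ tm ≠ tb ∧
      (tm = t+1 ∨ tm = t-1) ∧ (tb = t+1 ∨ tb = t-1) ∧
      s(p t, p tm) ∈ M ∧ s(p t, p tb) ∈ Mopt := by
  by_cases ht : t % 2 = 1
  · refine ⟨t+1, t-1, by omega, by omega, by omega, by omega, by omega,
      Or.inl rfl, Or.inr rfl, (hP.2.1 t h2).2 ht, ?_⟩
    have h0 : (t-1) % 2 = 0 := by omega
    have hm := (hP.2.1 (t-1) (by omega)).1 h0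
    have he : t - 1 + 1 = t := by omega
    rw [he] at hm
    rwa [Sym2.eq_swap] at hm
  · refine ⟨t-1, t+1, by omega, by omega, by omega, by omega, by omega,
      Or.inr rfl, Or.inl rfl, ?_, (hP.2.1 t h2).1 (by omega)⟩
    have h1' : (t-1) % 2 = 1 := by omega
    have hm := (hP.2.1 (t-1) (by omega)).2 h1'
    have he : t - 1 + 1 = t := by omega
    rw [he] at hm
    rwa [Sym2.eq_swap] at hm

lemma internal_of_matched {Mopt : Set (Sym2 V)} {m : ℕ} {p : ℕ → V}
    (hP : IsAugPath E.M Mopt m p) {x : V} (hx : x ∈ pathSupp m p)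
    {j : ℕ} (hm : matchedAt E j x) : ∃ t, 1 ≤ t ∧ t ≤ 2*m ∧ x = p t := by
  obtain ⟨t0, ht0, rfl⟩ := hx
  have hMe : s(E.sel j, E.oth j) ∈ E.M := ⟨j, hm.1, rfl⟩
  have hxe : p t0 ∈ s(E.sel j, E.oth j) := by
    rcases hm.2 with h | h
    · rw [h]; exact Sym2.mem_mk_left _ _
    · rw [h]; exact Sym2.mem_mk_right _ _
  refine ⟨t0, ?_, ?_, rfl⟩
  · rcases Nat.eq_zero_or_pos t0 with rfl | h
    · exact absurd hxe ((hP.2.2 _ hMe).1)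
    · omega
  · have ht0' : t0 ≤ 2*m+1 := ht0
    rcases Nat.lt_or_ge t0 (2*m+1) with h | h
    · omega
    · have : t0 = 2*m+1 := by omega
      rw [this] at hxe
      exact absurd hxe ((hP.2.2 _ hMe).2)

lemma M_sub_edgeSet {e : Sym2 V} (he : e ∈ E.M) : e ∈ G.edgeSet := by
  obtain ⟨j, hj, rfl⟩ := he
  exact (adj_le_G E (le_of_lt hj) (E.adj j hj))

/-- Uniqueness of the F-neighbor of an internal path vertex. -/
lemma F_nbr_unique (hdeg : maxDegLE G 3) {Mopt : Set (Sym2 V)}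
    (hOsub : Mopt ⊆ G.edgeSet) {m : ℕ} {p : ℕ → V}
    (hP : IsAugPath E.M Mopt m p) {t : ℕ} (h1 : 1 ≤ t) (h2 : t ≤ 2*m)
    {w1 w2 : V} (hF1 : FEdge G E.M Mopt (p t) w1) (hF2 : FEdge G E.M Mopt (p t) w2) :
    w1 = w2 := by
  by_contra hne
  obtain ⟨tm, tb, htm, hto, htmt, htot, htmto, _, _, hMe, hOe⟩ := aug_internal_edges hP h1 h2
  have hinj := hP.1
  have ht : t ≤ 2*m+1 := by omega
  have hw1m : w1 ≠ p tm := by rintro rfl; exact hF1.2.1 hMe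
  have hw1o : w1 ≠ p tb := by rintro rfl; exact hF1.2.2 hOe
  have hw2m : w2 ≠ p tm := by rintro rfl; exact hF2.2.1 hMe
  have hw2o : w2 ≠ p tb := by rintro rfl; exact hF2.2.2 hOe
  have hmo : p tm ≠ p tb := fun h => htmto (hinj _ htm _ hto h)
  have h4 : 4 ≤ (G.neighborSet (p t)).ncard :=
    four_le_ncard (s := G.neighborSet (p t))
      (G.mem_edgeSet.mp (M_sub_edgeSet E hMe))
      (G.mem_edgeSet.mp (hOsub hOe))
      (G.mem_edgeSet.mp hF1.1) (G.mem_edgeSet.mp hF2.1)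
      hmo (Ne.symm hw1m) (Ne.symm hw2m) (Ne.symm hw1o) (Ne.symm hw2o) hne
  have := hdeg (p t)
  have hdd : deg G (p t) = (G.neighborSet (p t)).ncard := rfl
  omega


lemma path_debits (hdeg : maxDegLE G 3) (h12 : E.Is12MinGreedy)
    {Mopt : Set (Sym2 V)} (hOM : IsMatchingSet G Mopt)
    {m : ℕ} {p : ℕ → V} (hP : IsAugPath E.M Mopt m p)
    {i : ℕ} (hc : creationStep E (pathSupp m p) i)
    (hd : deg (E.Gs i) (E.sel i) = 1 ∨ deg (E.Gs i) (E.sel i) = 3) :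
    debits E E.M Mopt (pathSupp m p) ≤ 2 * m - 2 := by
  classical
  obtain ⟨hik, hselS, hothS, hcmin⟩ := hc
  have hinj := hP.1
  set u := E.sel i with hu
  set v := E.oth i with hv
  have hadj : (E.Gs i).Adj u v := E.adj i hik
  have hneuv : u ≠ v := hadj.ne
  have hmu : matchedAt E i u := ⟨hik, Or.inl rfl⟩
  have hmv : matchedAt E i v := ⟨hik, Or.inr rfl⟩
  obtain ⟨tu, htu1, htu2, hu_eq⟩ := internal_of_matched E hP hselS hmu
  obtain ⟨tv, zu, htv0, hzu0, htvtu, hzutu, htvzu, htvd, hzud, hMedge, hOedge⟩ :=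
    aug_internal_edges hP htu1 htu2
  have hMequv : s(p tu, p tv) = s(u, v) :=
    M_edge_unique E hmu hMedge (by rw [hu_eq]; exact Sym2.mem_mk_left _ _)
  have hveq : v = p tv := by
    rcases Sym2.eq_iff.mp hMequv with ⟨h1, h2⟩ | ⟨h1, h2⟩
    · exact h2.symm
    · exfalso
      have : p tv = p tu := by rw [h2, hu_eq]
      exact htvtu (hinj _ htv0 _ (by omega) this)
  -- tv is internal
  obtain ⟨tv', htv1', htv2', hveq'⟩ := internal_of_matched E hP hothS hmv
  have htveq : tv' = tv := hinj _ (by omega) _ htv0 (hveq'.symm.trans hveq)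
  have htv1 : 1 ≤ tv := by omega
  have htv2 : tv ≤ 2*m := by omega
  -- edges at tv
  obtain ⟨tm2, zv, htm2b, hzv0, htm2tv, hzvtv, htm2zv, htm2d, hzvd, hMedge2, hOedge2⟩ :=
    aug_internal_edges hP htv1 htv2
  have hMequv2 : s(p tv, p tm2) = s(u, v) :=
    M_edge_unique E hmv hMedge2 (by rw [hveq]; exact Sym2.mem_mk_left _ _)
  have htm2tu : tm2 = tu := by
    rcases Sym2.eq_iff.mp hMequv2 with ⟨h1, h2⟩ | ⟨h1, h2⟩
    · exfalso
      have : p tv = p tu := by rw [h1, hu_eq]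
      exact htvtu (hinj _ htv0 _ (by omega) this)
    · have : p tm2 = p tu := by rw [h2, hu_eq]
      exact hinj _ htm2b _ (by omega) this
  have hzvtu : zv ≠ tu := by rw [← htm2tu]; exact fun h => htm2zv h.symm
  have hzuzv : zu ≠ zv := by
    rcases hzud with h1 | h1 <;> rcases hzvd with h2 | h2 <;> rcases htvd with h3 | h3 <;> omega
  -- no path vertex is matched before step i
  have hnmb : ∀ t', t' ≤ 2*m+1 → ∀ j, j < i → ¬ matchedAt E j (p t') := by
    intro t' ht' j hj hmj
    obtain ⟨t'', h1'', h2'', heq''⟩ :=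
      internal_of_matched E hP ⟨t', ht', rfl⟩ hmj
    obtain ⟨tm'', tb'', htm'', _, _, _, _, _, _, hMe'', _⟩ := aug_internal_edges hP h1'' h2''
    have hmem'' : p t'' ∈ s(p t'', p tm'') := Sym2.mem_mk_left _ _
    have heqe := M_edge_unique E (i := j) (x := p t'')
      ⟨hmj.1, by rw [← heq'']; exact hmj.2⟩ hMe'' hmem''
    refine hcmin j hj ?_
    rcases Sym2.eq_iff.mp heqe with ⟨h1, h2⟩ | ⟨h1, h2⟩
    · exact ⟨⟨t'', by exact (by omega : t'' ≤ 2*m+1), h1⟩, ⟨tm'', htm'', h2⟩⟩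
    · exact ⟨⟨tm'', htm'', h2⟩, ⟨t'', by exact (by omega : t'' ≤ 2*m+1), h1⟩⟩
  -- presence of M ∪ Mopt path edges at step i
  have hpres : ∀ t1 t2, t1 ≤ 2*m+1 → t2 ≤ 2*m+1 → s(p t1, p t2) ∈ Mopt →
      (E.Gs i).Adj (p t1) (p t2) := by
    intro t1 t2 h1 h2 hO
    exact present E (le_of_lt hik) (G.mem_edgeSet.mp (hOM.1 hO))
      (fun j hj => hnmb t1 h1 j hj) (fun j hj => hnmb t2 h2 j hj)
  -- dispatch the degree-1 case
  rcases hd with hd1 | hd3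
  · exfalso
    have hzuN : p zu ∈ (E.Gs i).neighborSet u := by
      rw [hu_eq]
      exact hpres tu zu (by omega) hzu0 hOedge
    have hvN : v ∈ (E.Gs i).neighborSet u := hadj
    have hvzu : v ≠ p zu := by
      rw [hveq]
      exact fun h => htvzu (hinj _ htv0 _ hzu0 h)
    have h2le : 2 ≤ deg (E.Gs i) u := by
      have hsub : ({v, p zu} : Set V) ⊆ (E.Gs i).neighborSet u := by
        rintro z (rfl | rfl) <;> assumption
      have := Set.ncard_le_ncard hsub (Set.toFinite _)
      rw [Set.ncard_pair hvzu] at this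
      exact this
    omega
  -- degree-3 case : regularity
  have hdegu_pos : 0 < deg (E.Gs i) u := deg_pos_of_adj hadj
  have hreg : ∀ z, 0 < deg (E.Gs i) z → deg (E.Gs i) z = 3 := by
    intro z hz
    by_contra hzz
    have hz3 : deg (E.Gs i) z ≤ 3 := le_trans (deg_le_deg_G E (le_of_lt hik) z) (hdeg z)
    have h12z : deg (E.Gs i) z = 1 ∨ deg (E.Gs i) z = 2 := by omega
    have hle := h12 i hik ⟨z, h12z⟩ z hz
    rw [← hu] at hle
    omega
  set T := {q : V × V | IsTransfer E E.M Mopt q.1 q.2 ∧ q.1 ∈ pathSupp m p} with hT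
  show T.ncard ≤ 2 * m - 2
  have hdataT : ∀ q ∈ T, ∃ t, 1 ≤ t ∧ t ≤ 2*m ∧ q.1 = p t ∧
      FEdge G E.M Mopt q.1 q.2 ∧ (∀ j, ¬ matchedAt E j q.2) := by
    intro q hq
    obtain ⟨l, hF, hep, hml, _⟩ := hq.1
    obtain ⟨t, h1, h2, heq⟩ := internal_of_matched E hP hq.2 hml
    exact ⟨t, h1, h2, heq, hF, fun j => endpoint_unmatched E hep⟩
  have hinjT : Set.InjOn Prod.fst T := by
    intro q1 hq1 q2 hq2 heq12
    obtain ⟨t, h1, h2, hq1e, hF1, _⟩ := hdataT q1 hq1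
    obtain ⟨t', h1', h2', hq2e, hF2, _⟩ := hdataT q2 hq2
    rw [hq1e] at hF1
    rw [← heq12, hq1e] at hF2
    exact Prod.ext heq12 (F_nbr_unique E hdeg hOM.1 hP h1 h2 hF1 hF2)
  -- the core geometric argument
  have CORE : ∀ tc tcb zc zcb : ℕ, 1 ≤ tc → tc ≤ 2*m → 1 ≤ tcb → tcb ≤ 2*m →
      zc ≤ 2*m+1 → zcb ≤ 2*m+1 → zc ≠ tc → zc ≠ tcb → zc ≠ zcb → zcb ≠ tcb →
      ((p tc = u ∧ p tcb = v) ∨ (p tc = v ∧ p tcb = u)) →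
      s(p tc, p zc) ∈ Mopt → s(p tcb, p zcb) ∈ Mopt →
      ∀ w, (p tc, w) ∈ T →
      E.sel (i+1) = p zc ∧ 1 ≤ zc ∧ zc ≤ 2*m ∧ (∀ w', (p zc, w') ∉ T) := by
    intro tc tcb zc zcb htc1 htc2 htcb1 htcb2 hzcb0 hzcbb0 hzctc hzctcb hzczcb hzcbtcb
      hcc hOc hOcb w hwT
    have hcmatch : matchedAt E i (p tc) := by
      rcases hcc with ⟨h1, _⟩ | ⟨h1, _⟩
      · rw [h1]; exact hmu
      · rw [h1]; exact hmv
    have hcbmatch : matchedAt E i (p tcb) := by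
      rcases hcc with ⟨_, h2⟩ | ⟨_, h2⟩
      · rw [h2]; exact hmv
      · rw [h2]; exact hmu
    obtain ⟨hF, hwun, hdgw, hadjw, hwsel, hwoth, _⟩ := transfer_data E hwT.1 hcmatch
    have hadjzc : (E.Gs i).Adj (p tc) (p zc) := hpres tc zc (by omega) hzcb0 hOc
    have hwzc : w ≠ p zc := by rintro rfl; exact hF.2.2 hOc
    have hwcb : w ≠ p tcb := by rintro rfl; exact hwun i hcbmatch
    have hcbzc : p tcb ≠ p zc :=
      fun h => hzctcb (hinj _ hzcb0 _ (by omega) h.symm)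
    have hposc : 0 < deg (E.Gs i) (p tc) := deg_pos_of_adj hadjzc
    have hdc : deg (E.Gs i) (p tc) = 3 := hreg _ hposc
    have hcbN : p tcb ∈ (E.Gs i).neighborSet (p tc) := by
      rcases hcc with ⟨h1, h2⟩ | ⟨h1, h2⟩
      · rw [h1, h2]; exact hadj
      · rw [h1, h2]; exact hadj.symm
    have hNc : (E.Gs i).neighborSet (p tc) = {p tcb, p zc, w} :=
      eq_triple_of_ncard3 hdc hcbN hadjzc hadjw hcbzc (Ne.symm hwcb) (Ne.symm hwzc)
    have hwuv : w ≠ u ∧ w ≠ v := ⟨fun h => hwun i (h ▸ hmu), fun h => hwun i (h ▸ hmv)⟩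
    have hNw' : (E.Gs (i+1)).neighborSet w = (E.Gs i).neighborSet w \ {u, v} :=
      neighborSet_succ E hik ⟨hwsel, hwoth⟩
    have hposw : 0 < deg (E.Gs i) w := deg_pos_of_adj hadjw.symm
    have hw3 : deg (E.Gs i) w = 3 := hreg _ hposw
    have hle1 : ((E.Gs i).neighborSet w \ {u, v}).ncard ≤ 1 := by
      rw [← hNw']; exact hdgw
    obtain ⟨huw, hvw⟩ := mem_pair_of_diff_small hw3 hle1
    have hp1 : deg (E.Gs (i+1)) w = 1 := by
      show ((E.Gs (i+1)).neighborSet w).ncard = 1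
      rw [hNw']
      exact ncard3_diff_pair hw3 huw hvw hneuv
    have hk1 : i + 1 < E.k := by
      obtain ⟨z0, hz0⟩ := Set.ncard_eq_one.mp
        (show ((E.Gs (i+1)).neighborSet w).ncard = 1 from hp1)
      have : z0 ∈ (E.Gs (i+1)).neighborSet w := by rw [hz0]; exact rfl
      exact adj_lt_k E (by omega) (this : (E.Gs (i+1)).Adj w z0)
    set sN := E.sel (i+1) with hsN
    have hsdeg : deg (E.Gs (i+1)) sN = 1 := by
      have hmin1 := h12 (i+1) hk1 ⟨w, Or.inl hp1⟩
      have hpos : 0 < deg (E.Gs (i+1)) sN := deg_pos_of_adj (E.adj (i+1) hk1)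
      have h1 := hmin1 w (by rw [hp1]; omega)
      rw [hp1, ← hsN] at h1
      omega
    have hsnu : sN ≠ u := by
      intro h
      have hempty : (E.Gs (i+1)).neighborSet sN = ∅ :=
        neighborSet_succ_matched E hik (Or.inl (h.trans hu))
      have h0' : deg (E.Gs (i+1)) sN = 0 := by
        show ((E.Gs (i+1)).neighborSet sN).ncard = 0
        rw [hempty]; exact Set.ncard_empty _
      omega
    have hsnv : sN ≠ v := by
      intro h
      have hempty : (E.Gs (i+1)).neighborSet sN = ∅ :=
        neighborSet_succ_matched E hik (Or.inr (h.trans hv))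
      have h0' : deg (E.Gs (i+1)) sN = 0 := by
        show ((E.Gs (i+1)).neighborSet sN).ncard = 0
        rw [hempty]; exact Set.ncard_empty _
      omega
    have hNsN : (E.Gs (i+1)).neighborSet sN = (E.Gs i).neighborSet sN \ {u, v} :=
      neighborSet_succ E hik ⟨hsnu, hsnv⟩
    have hposN : 0 < deg (E.Gs i) sN := by
      obtain ⟨z0, hz0⟩ := Set.ncard_eq_one.mp
        (show ((E.Gs (i+1)).neighborSet sN).ncard = 1 from hsdeg)
      have hz0m : z0 ∈ (E.Gs (i+1)).neighborSet sN := by rw [hz0]; exact rfl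
      rw [hNsN] at hz0m
      exact (Set.ncard_pos (Set.toFinite _)).mpr ⟨z0, hz0m.1⟩
    have hs3 : deg (E.Gs i) sN = 3 := hreg sN hposN
    have hleN : ((E.Gs i).neighborSet sN \ {u, v}).ncard ≤ 1 := by
      rw [← hNsN]; exact le_of_eq hsdeg
    obtain ⟨huN, hvN⟩ := mem_pair_of_diff_small hs3 hleN
    have hsmatched : matchedAt E (i+1) sN := ⟨hk1, Or.inl rfl⟩
    have hsNmem : sN ∈ (E.Gs i).neighborSet (p tc) := by
      rcases hcc with ⟨h1, _⟩ | ⟨h1, _⟩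
      · rw [h1]; exact mem_nbr_symm.mp huN
      · rw [h1]; exact mem_nbr_symm.mp hvN
    rw [hNc] at hsNmem
    have hsNzc : sN = p zc := by
      rcases hsNmem with h | h | h
      · exfalso
        rcases hcc with ⟨_, h2⟩ | ⟨_, h2⟩
        · exact hsnv (h.trans h2)
        · exact hsnu (h.trans h2)
      · exact h
      · exfalso
        rw [Set.mem_singleton_iff] at h
        exact hwun (i+1) (h ▸ hsmatched)
    -- zc is internal
    have hzcint : 1 ≤ zc ∧ zc ≤ 2*m := by
      have hzm : matchedAt E (i+1) (p zc) := hsNzc ▸ hsmatched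
      obtain ⟨t, h1, h2, heq⟩ := internal_of_matched E hP ⟨zc, hzcb0, rfl⟩ hzm
      have : zc = t := hinj _ hzcb0 _ (by omega) heq
      omega
    -- the F-edge from p zc to p tcb
    have hcbNzc : p tcb ∈ (E.Gs i).neighborSet (p zc) := by
      rw [← hsNzc]
      rcases hcc with ⟨_, h2⟩ | ⟨_, h2⟩
      · rw [h2]; exact hvN
      · rw [h2]; exact huN
    have hGedge : s(p zc, p tcb) ∈ G.edgeSet :=
      G.mem_edgeSet.mpr (adj_le_G E (le_of_lt hik) (hcbNzc : (E.Gs i).Adj (p zc) (p tcb)))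
    have hnotM : s(p zc, p tcb) ∉ E.M := by
      intro hMm
      have heqe := M_edge_unique E hcbmatch hMm (Sym2.mem_mk_right _ _)
      have hzcuv : p zc = u ∨ p zc = v := by
        rcases Sym2.eq_iff.mp heqe with ⟨h1, _⟩ | ⟨h1, _⟩
        · exact Or.inl h1
        · exact Or.inr h1
      rcases hzcuv with h | h <;> rcases hcc with ⟨h1, h2⟩ | ⟨h1, h2⟩
      · exact hzctc (hinj _ hzcb0 _ (by omega) (h.trans h1.symm))
      · exact hzctcb (hinj _ hzcb0 _ (by omega) (h.trans h2.symm))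
      · exact hzctcb (hinj _ hzcb0 _ (by omega) (h.trans h2.symm))
      · exact hzctc (hinj _ hzcb0 _ (by omega) (h.trans h1.symm))
    have hnotO : s(p zc, p tcb) ∉ Mopt := by
      intro hOm
      have hnee : s(p zc, p tcb) ≠ s(p tcb, p zcb) := by
        intro h
        rcases Sym2.eq_iff.mp h with ⟨h1, _⟩ | ⟨h1, _⟩
        · exact hzctcb (hinj _ hzcb0 _ (by omega) h1)
        · exact hzczcb (hinj _ hzcb0 _ hzcbb0 h1)
      exact hOM.2 _ hOm _ hOcb hnee (p tcb) (Sym2.mem_mk_right _ _) (Sym2.mem_mk_left _ _)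
    refine ⟨hsNzc.symm ▸ rfl, hzcint.1, hzcint.2, ?_⟩
    · intro w' hw'T
      have hzmatch : matchedAt E (i+1) (p zc) := hsNzc ▸ hsmatched
      obtain ⟨hF', hwun', _, _, _, _, _⟩ := transfer_data E hw'T.1 hzmatch
      have : w' = p tcb :=
        F_nbr_unique E hdeg hOM.1 hP hzcint.1 hzcint.2 hF' ⟨hGedge, hnotM, hnotO⟩
      exact hwun' i (this ▸ hcbmatch)
  -- choose the two missing indices
  have key : ∃ t1 t2, t1 ≠ t2 ∧ 1 ≤ t1 ∧ t1 ≤ 2*m ∧ 1 ≤ t2 ∧ t2 ≤ 2*m ∧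
      (∀ w, (p t1, w) ∉ T) ∧ (∀ w, (p t2, w) ∉ T) := by
    by_cases hTu : ∃ w, (u, w) ∈ T
    · obtain ⟨w1, hw1⟩ := hTu
      rw [hu_eq] at hw1
      have C1 := CORE tu tv zu zv htu1 htu2 htv1 htv2 hzu0 hzv0 hzutu
        (fun h => htvzu h.symm) hzuzv hzvtv (Or.inl ⟨hu_eq.symm, hveq.symm⟩)
        hOedge hOedge2 w1 hw1
      by_cases hTv : ∃ w, (v, w) ∈ T
      · exfalso
        obtain ⟨w2, hw2⟩ := hTv
        rw [hveq] at hw2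
        have C2 := CORE tv tu zv zu htv1 htv2 htu1 htu2 hzv0 hzu0 hzvtv hzvtu
          (fun h => hzuzv h.symm) hzutu (Or.inr ⟨hveq.symm, hu_eq.symm⟩)
          hOedge2 hOedge w2 hw2
        have : p zu = p zv := C1.1.symm.trans C2.1
        exact hzuzv (hinj _ hzu0 _ hzv0 this)
      · refine ⟨tv, zu, htvzu, htv1, htv2, C1.2.1, C1.2.2.1, ?_, C1.2.2.2⟩
        · intro w hw
          rw [← hveq] at hw
          exact hTv ⟨w, hw⟩
    · by_cases hTv : ∃ w, (v, w) ∈ T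
      · obtain ⟨w2, hw2⟩ := hTv
        rw [hveq] at hw2
        have C2 := CORE tv tu zv zu htv1 htv2 htu1 htu2 hzv0 hzu0 hzvtv hzvtu
          (fun h => hzuzv h.symm) hzutu (Or.inr ⟨hveq.symm, hu_eq.symm⟩)
          hOedge2 hOedge w2 hw2
        refine ⟨tu, zv, ?_, htu1, htu2, C2.2.1, C2.2.2.1, ?_, C2.2.2.2⟩
        · exact fun h => hzvtu h.symm
        · intro w hw
          rw [← hu_eq] at hw
          exact hTu ⟨w, hw⟩
      · refine ⟨tu, tv, fun h => htvtu h.symm, htu1, htu2, htv1, htv2, ?_, ?_⟩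
        · intro w hw
          rw [← hu_eq] at hw
          exact hTu ⟨w, hw⟩
        · intro w hw
          rw [← hveq] at hw
          exact hTv ⟨w, hw⟩
  obtain ⟨t1, t2, hne12, h11, h12b, h21, h22, hno1, hno2⟩ := key
  have hsub : Prod.fst '' T ⊆ p '' (Set.Icc 1 (2*m) \ {t1, t2}) := by
    rintro x ⟨q, hq, rfl⟩
    obtain ⟨t, ha, hb, heq, _, _⟩ := hdataT q hq
    refine ⟨t, ⟨Set.mem_Icc.mpr ⟨ha, hb⟩, ?_⟩, heq.symm⟩
    rintro (rfl | rfl)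
    · exact hno1 q.2 (by rwa [show (p t, q.2) = q from Prod.ext heq.symm rfl])
    · exact hno2 q.2 (by rwa [show (p t, q.2) = q from Prod.ext heq.symm rfl])
  have hIcc : (Set.Icc 1 (2*m)).ncard = 2*m := by
    rw [← Finset.coe_Icc, Set.ncard_coe_finset, Nat.card_Icc]
    omega
  have hDcard : (Set.Icc 1 (2*m) \ ({t1, t2} : Set ℕ)).ncard = 2*m - 2 := by
    have hsub2 : ({t1, t2} : Set ℕ) ⊆ Set.Icc 1 (2*m) := by
      rintro z (rfl | rfl)
      · exact Set.mem_Icc.mpr ⟨h11, h12b⟩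
      · exact Set.mem_Icc.mpr ⟨h21, h22⟩
    rw [Set.ncard_diff hsub2 (Set.toFinite _), hIcc, Set.ncard_pair hne12]
  calc T.ncard = (Prod.fst '' T).ncard := (Set.ncard_image_of_injOn hinjT).symm
    _ ≤ (p '' (Set.Icc 1 (2*m) \ {t1, t2})).ncard :=
        Set.ncard_le_ncard hsub (Set.toFinite _)
    _ ≤ (Set.Icc 1 (2*m) \ ({t1, t2} : Set ℕ)).ncard := Set.ncard_image_le (Set.toFinite _)
    _ = 2*m - 2 := hDcard


end Lemmas

/-- two debits are missing, i.e. d_X ≤ D_X − 2, (a) if the selected vertex of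
the creation step has degree 1, (b) if it has degree 3, and (c) if X is a singleton. -/
theorem two_missing_debits {V : Type} [Fintype V] (G : SimpleGraph V)
    (hdeg : maxDegLE G 3)
    (E : GreedyExec V G) (h12 : E.Is12MinGreedy)
    (Mopt : Set (Sym2 V)) (hnf : NormalForm G E.M Mopt) :
    (∀ x y : V, s(x, y) ∈ E.M → s(x, y) ∈ Mopt →
      debits E E.M Mopt ({x, y} : Set V) ≤ 4 - 2) ∧
    (∀ (m : ℕ) (p : ℕ → V), IsAugPath E.M Mopt m p →
      ∀ i : ℕ, creationStep E (pathSupp m p) i →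
        (deg (E.Gs i) (E.sel i) = 1 ∨ deg (E.Gs i) (E.sel i) = 3) →
        debits E E.M Mopt (pathSupp m p) ≤ 2 * m - 2) := by
  constructor
  · intro x y hM _
    have h := singleton_debits E hdeg h12 Mopt hM
    omega
  · intro m p hP i hc hd
    exact path_debits E hdeg h12 hnf.1.1 hP hc hd

end

end MinGreedy
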